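/- Let G be a finitely generated residually finite group and let φ : G → G be a group endomorphism such that the image φ(G) has finite index in G. Then there exists a natural number n such that the restriction of φ to the subgroup φ^n(G) (the image of the n-th iterate of φ) is injective. -/

import Mathlib

/-- In a finite type, some positive iterate of any self-map is idempotent. -/
theorem hirshon_exists_iterate_idem {α : Type*} [Finite α] (f : α → α) :
    ∃ n : ℕ, 0 < n ∧ f^[n + n] = f^[n] := by
  obtain ⟨i, j, hij, h⟩ := Finite.exists_ne_map_eq_of_infinite (fun n : ℕ => f^[n])
  wlog hlt : i < j generalizing i j
  · exact this j i hij.symm h.symm (hij.lt_or_gt.resolve_left hlt)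
  set p := j - i with hp
  have hp0 : 0 < p := Nat.sub_pos_of_lt hlt
  have hip : i + p = j := by omega
  have hshift : ∀ m, i ≤ m → f^[m + p] = f^[m] := by
    intro m hm
    obtain ⟨k, rfl⟩ := Nat.exists_eq_add_of_le hm
    have h1 : i + k + p = k + (i + p) := by ring
    have h2 : k + i = i + k := by ring
    rw [h1, hip, Function.iterate_add, ← h, ← Function.iterate_add, h2]
  have hmain : ∀ k m, i ≤ m → f^[m + k * p] = f^[m] := by
    intro k
    induction k with
    | zero => simp
    | succ k ih =>
      intro m hm
      have h3 : m + (k + 1) * p = m + k * p + p := by ring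
      rw [h3, hshift _ (le_trans hm (Nat.le_add_right _ _)), ih m hm]
  refine ⟨(i + 1) * p, by positivity, ?_⟩
  have hle : i ≤ (i + 1) * p := by nlinarith
  exact hmain (i + 1) ((i + 1) * p) hle

/-- There are finitely many homomorphisms from a finitely generated group to a
finite group. -/
theorem hirshon_finite_monoidHom (G F : Type*) [Group G] [Group.FG G] [Group F] [Finite F] :
    Finite (G →* F) := by
  obtain ⟨S, hS, hfin⟩ := Group.fg_iff.mp ‹Group.FG G›
  haveI := hfin.to_subtype
  apply Finite.of_injective (fun f : G →* F => (fun s : S => f s))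
  intro f g h
  exact MonoidHom.eq_of_eqOn_dense hS fun x hx => congrFun h ⟨x, hx⟩

/-- Key vanishing lemma: if `x` lies in every iterated image `φ^n(G)` and is killed by
`φ`, then `x = 1`, for `G` finitely generated and residually finite. -/
theorem hirshon_vanish (G : Type*) [Group G] [Group.FG G]
    (hres : ∀ x : G, x ≠ 1 → ∃ N : Subgroup G, N.Normal ∧ N.FiniteIndex ∧ x ∉ N)
    (φ : Monoid.End G) (x : G) (hker : φ x = 1)
    (hall : ∀ n : ℕ, x ∈ ((φ ^ n : Monoid.End G) : G →* G).range) : x = 1 := by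
  by_contra hx
  obtain ⟨N, hNnorm, hNfi, hxN⟩ := hres x hx
  haveI := hNnorm
  haveI := hNfi
  set F := Equiv.Perm (G ⧸ N) with hF
  haveI : Finite (G →* F) := hirshon_finite_monoidHom G F
  set M : Subgroup G := ⨅ f : G →* F, f.ker with hM
  haveI hMnorm : M.Normal := by
    constructor
    intro a ha g
    rw [Subgroup.mem_iInf] at ha ⊢
    intro f
    exact f.normal_ker.conj_mem a (ha f) g
  haveI hMfi : M.FiniteIndex := Subgroup.finiteIndex_iInf fun f => inferInstance
  have hMcomap : M ≤ Subgroup.comap (φ : G →* G) M := by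
    intro y hy
    refine Subgroup.mem_comap.mpr ?_
    rw [Subgroup.mem_iInf] at hy ⊢
    intro f
    exact hy (f.comp (φ : G →* G))
  set π := QuotientGroup.mk' M with hπ
  set ψ := QuotientGroup.map M M (φ : G →* G) hMcomap with hψ
  have hcomm : ∀ y : G, ψ (π y) = π (φ y) := fun y => rfl
  have hcommn : ∀ (n : ℕ) (y : G), (⇑ψ)^[n] (π y) = π ((⇑φ)^[n] y) := by
    intro n
    induction n with
    | zero => intro y; rfl
    | succ n ih =>
      intro y
      rw [Function.iterate_succ_apply, Function.iterate_succ_apply, hcomm, ih]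
  obtain ⟨n, hn, hidem⟩ := hirshon_exists_iterate_idem (⇑ψ)
  obtain ⟨y, hy⟩ := hall n
  have hyx : (⇑φ)^[n] y = x := by rw [← Monoid.End.coe_pow]; exact hy
  have hxq : π x = (⇑ψ)^[n] (π y) := by rw [hcommn, hyx]
  have h1 : ψ (π x) = 1 := by rw [hcomm, hker, map_one]
  have hfix : (⇑ψ)^[n] (π x) = π x := by
    rw [hxq, ← Function.iterate_add_apply, hidem]
  obtain ⟨m, rfl⟩ : ∃ m, n = m + 1 := ⟨n - 1, (Nat.succ_pred_eq_of_pos hn).symm⟩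
  have hone : π x = 1 := by
    conv_lhs => rw [← hfix]
    rw [Function.iterate_succ_apply, h1]
    exact iterate_map_one ψ m
  have hxM : x ∈ M := (QuotientGroup.eq_one_iff x).mp hone
  have hxN' : x ∈ N := by
    have hle : M ≤ (MulAction.toPermHom G (G ⧸ N)).ker :=
      iInf_le (fun f : G →* F => f.ker) (MulAction.toPermHom G (G ⧸ N))
    have := hle hxM
    rwa [← Subgroup.normalCore_eq_ker, Subgroup.normalCore_eq_self] at this
  exact hxN hxN'

/-- **Hirshon's theorem.** If `G` is a finitely generated residually finite group
and `φ : G → G` is an endomorphism whose image has finite index in `G`, then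
there is an `n` such that `φ` is injective on the subgroup `φ^n(G)`. -/
theorem exists_injOn_iterate_range
    (G : Type*) [Group G] [Group.FG G]
    (hres : ∀ x : G, x ≠ 1 → ∃ N : Subgroup G, N.Normal ∧ N.FiniteIndex ∧ x ∉ N)
    (φ : Monoid.End G) (hφ : (φ : G →* G).range.FiniteIndex) :
    ∃ n : ℕ, Set.InjOn φ (((φ ^ n : Monoid.End G) : G →* G).range : Set G) := by
  classical
  set H : ℕ → Subgroup G := fun n => ((φ ^ n : Monoid.End G) : G →* G).range with hH
  -- successive images
  have key : ∀ (k : ℕ) (y : G), (φ ^ (k + 1) : Monoid.End G) y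
      = (φ ^ k : Monoid.End G) (φ y) := by
    intro k y
    rw [pow_succ]
    rfl
  have key' : ∀ (k : ℕ) (y : G), (φ ^ (k + 1) : Monoid.End G) y
      = φ ((φ ^ k : Monoid.End G) y) := by
    intro k y
    rw [pow_succ']
    rfl
  have hmap : ∀ n, H (n + 1) = (H n).map (φ : G →* G) := by
    intro n
    have : ((φ ^ (n + 1) : Monoid.End G) : G →* G)
        = ((φ : G →* G).comp ((φ ^ n : Monoid.End G) : G →* G)) := by
      refine MonoidHom.ext fun z => ?_
      exact key' n z
    simp only [hH, this]; exact MonoidHom.range_comp _ _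
  have hmono : ∀ n, H (n + 1) ≤ H n := by
    intro n
    rintro z ⟨y, rfl⟩
    exact ⟨φ y, (key n y).symm⟩
  have hmono' : ∀ m n, m ≤ n → H n ≤ H m := by
    intro m n hmn
    induction n with
    | zero => have : m = 0 := Nat.le_zero.mp hmn; subst this; exact le_rfl
    | succ n ih =>
      rcases Nat.lt_or_ge m (n + 1) with h | h
      · exact le_trans (hmono n) (ih (Nat.lt_succ_iff.mp h))
      · have : m = n + 1 := le_antisymm hmn h
        subst this; exact le_rfl
  -- finite index of the images
  have hfi : ∀ n, (H n).FiniteIndex := by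
    intro n
    induction n with
    | zero =>
      have : H 0 = ⊤ := by
        ext z
        simp only [Subgroup.mem_top, iff_true]
        exact ⟨z, rfl⟩
      rw [this]; infer_instance
    | succ n ih =>
      constructor
      rw [hmap n, Subgroup.index_map (H n) (φ : G →* G)]
      apply mul_ne_zero
      · intro h0
        exact ih.index_ne_zero
          (Nat.eq_zero_of_zero_dvd (h0 ▸ Subgroup.index_dvd_of_le le_sup_left))
      · exact hφ.index_ne_zero
  -- the chain of relative indices
  set c : ℕ → ℕ := fun n => (H (n + 1)).relIndex (H n) with hc
  have hc0 : ∀ n, c n ≠ 0 := by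
    intro n h0
    have h0' : (H (n + 1)).relIndex (H n) = 0 := h0
    exact (hfi (n + 1)).index_ne_zero
      (by rw [← Subgroup.relIndex_mul_index (hmono n), h0', zero_mul])
  have hsubC : ∀ n, H (n + 1) ≤ Subgroup.comap (φ : G →* G) (H (n + 2)) := by
    intro n
    rintro z ⟨y, rfl⟩
    have h2 : n + 2 = n + 1 + 1 := by omega
    refine Subgroup.mem_comap.mpr ⟨y, ?_⟩
    rw [h2]
    exact key' (n + 1) y
  have hcomapC : ∀ n, (Subgroup.comap (φ : G →* G) (H (n + 2))).relIndex (H n) = c (n + 1) := by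
    intro n
    rw [Subgroup.relIndex_comap (H (n + 2)) (φ : G →* G), ← hmap n]
  -- the key splitting: c n = relindex (H (n+1)) (C' n) * c (n+1)
  have hsplit : ∀ n, (H (n + 1)).relIndex (Subgroup.comap (φ : G →* G) (H (n + 2)) ⊓ H n)
      * c (n + 1) = c n := by
    intro n
    have h1 : H (n + 1) ≤ Subgroup.comap (φ : G →* G) (H (n + 2)) ⊓ H n :=
      le_inf (hsubC n) (hmono n)
    have h2 : Subgroup.comap (φ : G →* G) (H (n + 2)) ⊓ H n ≤ H n := inf_le_right
    have h3 := Subgroup.relIndex_mul_relIndex (H (n + 1))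
      (Subgroup.comap (φ : G →* G) (H (n + 2)) ⊓ H n) (H n) h1 h2
    rw [Subgroup.inf_relIndex_right, hcomapC n] at h3
    exact h3
  have hanti : ∀ n, c (n + 1) ≤ c n := by
    intro n
    have := hsplit n
    calc c (n + 1) ≤ (H (n + 1)).relIndex (Subgroup.comap (φ : G →* G) (H (n + 2)) ⊓ H n)
        * c (n + 1) :=
      Nat.le_mul_of_pos_left _ (Nat.pos_of_ne_zero (by
        intro h0
        rw [h0, zero_mul] at this
        exact hc0 n this.symm))
    _ = c n := this
  -- antitone in general
  have hantile : ∀ m n, m ≤ n → c n ≤ c m := by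
    intro m n hmn
    induction n with
    | zero => have : m = 0 := Nat.le_zero.mp hmn; subst this; exact le_rfl
    | succ n ih =>
      rcases Nat.lt_or_ge m (n + 1) with h | h
      · exact le_trans (hanti n) (ih (Nat.lt_succ_iff.mp h))
      · have : m = n + 1 := le_antisymm hmn h
        subst this; exact le_rfl
  -- choose the stabilization point
  have hne : (Set.range c).Nonempty := ⟨c 0, 0, rfl⟩
  obtain ⟨N, hN⟩ : ∃ N, c N = sInf (Set.range c) := Nat.sInf_mem hne
  have hconst : ∀ n, N ≤ n → c n = c N := by
    intro n hn
    refine le_antisymm (hantile N n hn) ?_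
    rw [hN]
    exact Nat.sInf_le ⟨n, rfl⟩
  -- at the stable range, the kernel intersected with H n is pushed down
  have hker_step : ∀ n, N ≤ n → (φ : G →* G).ker ⊓ H n ≤ H (n + 1) := by
    intro n hn
    have hceq : (H (n + 1)).relIndex (Subgroup.comap (φ : G →* G) (H (n + 2)) ⊓ H n) = 1 := by
      have h1 := hsplit n
      have h2 : c (n + 1) = c n := by rw [hconst (n + 1) (le_trans hn (Nat.le_succ n)),
        hconst n hn]
      rw [h2] at h1
      exact (mul_left_eq_self₀.mp h1).resolve_right (hc0 n)
    have hle : Subgroup.comap (φ : G →* G) (H (n + 2)) ⊓ H n ≤ H (n + 1) :=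
      Subgroup.relIndex_eq_one.mp hceq
    intro z hz
    obtain ⟨hz1, hz2⟩ := hz
    have hz1' : (φ : G →* G) z = 1 := hz1
    refine hle (Subgroup.mem_inf.mpr ⟨Subgroup.mem_comap.mpr ?_, hz2⟩)
    change (φ : G →* G) z ∈ H (n + 2); rw [hz1']
    exact one_mem _
  -- everything in ker φ ⊓ H N lies in all H m
  have hall : ∀ z, z ∈ (φ : G →* G).ker ⊓ H N → ∀ m, z ∈ H m := by
    intro z hz m
    rcases Nat.le_total m N with h | h
    · exact hmono' m N h hz.2
    · -- induction from N up to m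
      have key : ∀ k, z ∈ H (N + k) := by
        intro k
        induction k with
        | zero => exact hz.2
        | succ k ih =>
          have h3 := hker_step (N + k) (Nat.le_add_right _ _) ⟨hz.1, ih⟩
          have h4 : N + (k + 1) = N + k + 1 := by omega
          rw [h4]
          exact h3
      obtain ⟨k, rfl⟩ := Nat.exists_eq_add_of_le h
      exact key k
  -- conclusion
  refine ⟨N, ?_⟩
  intro a ha b hb hab
  have haH : a ∈ H N := ha
  have hbH : b ∈ H N := hb
  have hzH : a * b⁻¹ ∈ H N := mul_mem haH (inv_mem hbH)
  have hzker : (φ : G →* G) (a * b⁻¹) = 1 := by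
    rw [map_mul, map_inv]
    have : (φ : G →* G) a = (φ : G →* G) b := hab
    rw [this, mul_inv_cancel]
  have hz1 : a * b⁻¹ = 1 := by
    refine hirshon_vanish G hres φ (a * b⁻¹) hzker ?_
    intro m
    exact hall (a * b⁻¹) ⟨hzker, hzH⟩ m
  exact mul_inv_eq_one.mp hz1
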